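/- arXiv:1104.3463 — 7 statements merged into one kernel-verified Lean document; each statement's English description precedes it below -/
import Mathlib

section
/- Let G be a finite simple graph on n ≥ 3 vertices. Then G is not in BP2 if and only if the complement Ḡ is connected, Ḡ has no cut vertex, and every vertex cut of Ḡ (if any) induces a connected subgraph of Ḡ. -/
/-- The induced subgraph of `G` on the vertex set `s` is covered by a single biclique. -/
def BP1On {V : Type*} (G : SimpleGraph V) (s : Set V) : Prop :=
  (∃ v, s = {v}) ∨
    ∃ A B : Set V, A.Nonempty ∧ B.Nonempty ∧ Disjoint A B ∧ A ∪ B = s ∧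
      ∀ a ∈ A, ∀ b ∈ B, G.Adj a b

/-- The induced subgraph of `G` on `s` can be partitioned into at most two parts,
each of which induces a graph in BP1. -/
def BP2On {V : Type*} (G : SimpleGraph V) (s : Set V) : Prop :=
  BP1On G s ∨
    ∃ A B : Set V, A.Nonempty ∧ B.Nonempty ∧ Disjoint A B ∧ A ∪ B = s ∧
      BP1On G A ∧ BP1On G B

lemma sep_not_connected {V : Type*} (H : SimpleGraph V) {s A B : Set V}
    (hA : A.Nonempty) (hB : B.Nonempty) (hd : Disjoint A B) (hu : A ∪ B = s)
    (hadj : ∀ a ∈ A, ∀ b ∈ B, ¬ H.Adj a b) : ¬ (H.induce s).Connected := by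
  intro hc
  obtain ⟨a, ha⟩ := hA
  obtain ⟨b, hb⟩ := hB
  have ha' : a ∈ s := hu ▸ Or.inl ha
  have hb' : b ∈ s := hu ▸ Or.inr hb
  obtain ⟨w⟩ := hc.preconnected ⟨a, ha'⟩ ⟨b, hb'⟩
  have key : ∀ (x y : s) (_ : (H.induce s).Walk x y), (x : V) ∈ A → (y : V) ∈ A := by
    intro x y w
    induction w with
    | nil => exact id
    | @cons x' z' y' hadj' w' ih =>
      intro hx
      apply ih
      have hz : (z' : V) ∈ s := z'.2
      have hza : (z' : V) ∈ A ∨ (z' : V) ∈ B := hu ▸ hz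
      have hHadj : H.Adj (x' : V) (z' : V) := hadj'
      rcases hza with h' | h'
      · exact h'
      · exact absurd hHadj (hadj _ hx _ h')
  have hbA := key _ _ w ha
  exact Set.disjoint_left.mp hd hbA hb

lemma not_connected_sep {V : Type*} (H : SimpleGraph V) {s : Set V} (hs : s.Nonempty)
    (hc : ¬ (H.induce s).Connected) :
    ∃ A B : Set V, A.Nonempty ∧ B.Nonempty ∧ Disjoint A B ∧ A ∪ B = s ∧
      ∀ a ∈ A, ∀ b ∈ B, ¬ H.Adj a b := by
  obtain ⟨u, hu⟩ := hs
  have hne : Nonempty s := ⟨⟨u, hu⟩⟩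
  have hpc : ¬ (H.induce s).Preconnected := fun hp => hc ⟨hp⟩
  have hxy : ∃ x y : s, ¬ (H.induce s).Reachable x y := by
    by_contra hco
    push_neg at hco
    exact hpc hco
  obtain ⟨x, y, hxy⟩ := hxy
  set A : Set V := {z | ∃ h : z ∈ s, (H.induce s).Reachable x ⟨z, h⟩} with hAdef
  have hAs : A ⊆ s := fun z hz => hz.1
  refine ⟨A, s \ A, ⟨x, x.2, SimpleGraph.Reachable.refl _⟩, ⟨y, y.2, ?_⟩,
    Set.disjoint_sdiff_right, Set.union_diff_cancel hAs, ?_⟩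
  · intro hy
    obtain ⟨hy', hr⟩ := hy
    exact hxy (by convert hr)
  · intro a ha b hb hadj
    apply hb.2
    obtain ⟨ha', hra⟩ := ha
    have hb' : b ∈ s := hb.1
    have : (H.induce s).Adj ⟨a, ha'⟩ ⟨b, hb'⟩ := hadj
    exact ⟨hb', hra.trans this.reachable⟩

lemma bp1_iff {V : Type*} (G : SimpleGraph V) {s : Set V} (hs : s.Nonempty) :
    BP1On G s ↔ ((∃ v, s = {v}) ∨ ¬ (Gᶜ.induce s).Connected) := by
  constructor
  · rintro (h | ⟨A, B, hA, hB, hd, hu, hadj⟩)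
    · exact Or.inl h
    · refine Or.inr (sep_not_connected Gᶜ hA hB hd hu ?_)
      intro a ha b hb hc
      exact hc.2 (hadj a ha b hb)
  · rintro (h | h)
    · exact Or.inl h
    · obtain ⟨A, B, hA, hB, hd, hu, hadj⟩ := not_connected_sep Gᶜ hs h
      refine Or.inr ⟨A, B, hA, hB, hd, hu, ?_⟩
      intro a ha b hb
      have hne : a ≠ b := fun he => Set.disjoint_left.mp hd ha (he ▸ hb)
      by_contra hg
      exact hadj a ha b hb (by rw [SimpleGraph.compl_adj]; exact ⟨hne, hg⟩)

/-- A finite simple graph on at least three vertices is not in BP2 if and only if its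
complement is connected, has no cut vertex, and every vertex cut of the complement
induces a connected subgraph of the complement. -/
theorem not_bp2_iff {V : Type*} [Fintype V] (G : SimpleGraph V)
    (h : 3 ≤ Fintype.card V) :
    ¬ BP2On G Set.univ ↔
      (Gᶜ.Connected ∧
       (∀ v : V, (Gᶜ.induce ({v}ᶜ : Set V)).Connected) ∧
       (∀ X : Set V, ¬ (Gᶜ.induce Xᶜ).Connected → (Gᶜ.induce X).Connected)) := by
  have huniv : (Set.univ : Set V).Nonempty := by
    have : 0 < Fintype.card V := by omega
    obtain ⟨v⟩ := Fintype.card_pos_iff.mp this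
    exact ⟨v, trivial⟩
  have hiso : (Gᶜ.induce (Set.univ : Set V)).Connected ↔ Gᶜ.Connected :=
    (SimpleGraph.induceUnivIso Gᶜ).connected_iff
  have hcard2 : ∀ a b : V, (Set.univ : Set V) ≠ {a} ∪ {b} := by
    intro a b habs
    obtain ⟨x, y, z, hxy, hxz, hyz⟩ := (Fintype.two_lt_card_iff (α := V)).mp (by omega)
    have hx : x ∈ ({a} ∪ {b} : Set V) := habs ▸ Set.mem_univ x
    have hy : y ∈ ({a} ∪ {b} : Set V) := habs ▸ Set.mem_univ y
    have hz : z ∈ ({a} ∪ {b} : Set V) := habs ▸ Set.mem_univ z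
    simp only [Set.mem_union, Set.mem_singleton_iff] at hx hy hz
    rcases hx with hx | hx <;> rcases hy with hy | hy <;> rcases hz with hz | hz <;>
      simp_all
  have hcard1 : ∀ a : V, (Set.univ : Set V) ≠ {a} := by
    intro a habs
    have := hcard2 a a
    simp at this
    exact this habs
  constructor
  · intro hbp2
    refine ⟨?_, ?_, ?_⟩
    · by_contra hH
      exact hbp2 (Or.inl ((bp1_iff G huniv).mpr (Or.inr (fun hc => hH (hiso.mp hc)))))
    · intro v
      by_contra hv
      obtain ⟨w, hw⟩ := Fintype.exists_ne_of_one_lt_card (α := V) (by omega) v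
      have hvc : ({v}ᶜ : Set V).Nonempty := ⟨w, by simpa using hw⟩
      refine hbp2 (Or.inr ⟨{v}, {v}ᶜ, ⟨v, rfl⟩, hvc, disjoint_compl_right, 
        Set.union_compl_self _, Or.inl ⟨v, rfl⟩, (bp1_iff G hvc).mpr (Or.inr hv)⟩)
    · intro X hXc
      by_contra hX
      rcases Set.eq_empty_or_nonempty X with hXe | hXne
      · rw [hXe, Set.compl_empty] at hXc
        exact hbp2 (Or.inl ((bp1_iff G huniv).mpr (Or.inr hXc)))
      rcases Set.eq_empty_or_nonempty Xᶜ with hXce | hXcne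
      · have : X = Set.univ := by
          rw [← Set.compl_empty, ← hXce, compl_compl]
        rw [this] at hX
        exact hbp2 (Or.inl ((bp1_iff G huniv).mpr (Or.inr hX)))
      · exact hbp2 (Or.inr ⟨X, Xᶜ, hXne, hXcne, disjoint_compl_right, 
          Set.union_compl_self _, (bp1_iff G hXne).mpr (Or.inr hX), 
          (bp1_iff G hXcne).mpr (Or.inr hXc)⟩)
  · rintro ⟨hconn, hcut, hsep⟩ (hbp1 | ⟨A, B, hA, hB, hd, hu, bpA, bpB⟩)
    · rcases (bp1_iff G huniv).mp hbp1 with ⟨v, hv⟩ | hnc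
      · exact hcard1 v hv
      · exact hnc (hiso.mpr hconn)
    · have hBA : B = Aᶜ := by
        ext x
        constructor
        · intro hx hxA
          exact Set.disjoint_left.mp hd hxA hx
        · intro hx
          rcases (hu ▸ Set.mem_univ x : x ∈ A ∪ B) with h' | h'
          · exact absurd h' hx
          · exact h'
      rcases (bp1_iff G hA).mp bpA with ⟨a, ha⟩ | hncA <;>
        rcases (bp1_iff G hB).mp bpB with ⟨b, hb⟩ | hncB
      · exact hcard2 a b (by rw [← hu, ha, hb])
      · rw [ha] at hBA
        exact hncB (hBA ▸ hcut a)
      · have hAB : A = Bᶜ := by rw [hBA, compl_compl]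
        rw [hb] at hAB
        exact hncA (hAB ▸ hcut b)
      · rw [hBA] at hncB
        exact hncA (hsep A hncB)
end

section
/- Let G be a finite simple graph on at least 3 vertices that is not in BP2. Then for every vertex v, the set N_{Ḡ}(v) of neighbours of v in the complement graph Ḡ has at least two elements, and the subgraph of Ḡ induced on N_{Ḡ}(v) is connected. -/
/-- If a finite simple graph `G` on at least three vertices is not in BP2, then for every
vertex `v`, the neighbourhood of `v` in the complement `Gᶜ` has at least two elements and
induces a connected subgraph of `Gᶜ`. -/
theorem compl_neighborSet_connected {V : Type*} [Fintype V] (G : SimpleGraph V)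
    (h3 : 3 ≤ Fintype.card V) (h : ¬ BP2On G Set.univ) (v : V) :
    2 ≤ (Gᶜ.neighborSet v).ncard ∧ (Gᶜ.induce (Gᶜ.neighborSet v)).Connected := by
  classical
  set N := Gᶜ.neighborSet v with hN
  have hvN : v ∉ N := fun hv => Gᶜ.irrefl hv
  -- Any vertex outside N other than v is G-adjacent to v
  have hadjv : ∀ b, b ∉ N → b ≠ v → G.Adj v b := by
    intro b hb hbv
    by_contra hnb
    exact hb ⟨Ne.symm hbv, hnb⟩
  -- The complement of N is BP1
  have hBP1compl : BP1On G Nᶜ := by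
    by_cases hB : (Nᶜ \ {v}).Nonempty
    · right
      refine ⟨{v}, Nᶜ \ {v}, ⟨v, rfl⟩, hB, ?_, ?_, ?_⟩
      · simp [Set.disjoint_left]
      · exact Set.union_diff_cancel (by simpa using hvN)
      · rintro a rfl b hb
        exact hadjv b (fun hbN => hb.1 hbN) hb.2
    · left
      refine ⟨v, ?_⟩
      rw [Set.not_nonempty_iff_eq_empty, Set.diff_eq_empty] at hB
      exact le_antisymm hB (by simpa using hvN)
  have hvNc : v ∈ Nᶜ := hvN
  -- N is nonempty
  have hNne : N.Nonempty := by
    rcases Set.eq_empty_or_nonempty N with he | hne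
    · exfalso
      apply h
      left
      rw [← Set.compl_empty, ← he]
      exact hBP1compl
    · exact hne
  -- N is not BP1 (otherwise G would be BP2)
  have hNotBP1 : ¬ BP1On G N := by
    intro hb
    exact h (Or.inr ⟨N, Nᶜ, hNne, ⟨v, hvNc⟩, disjoint_compl_right,
      Set.union_compl_self N, hb, hBP1compl⟩)
  have hNfin : N.Finite := Set.toFinite N
  constructor
  · -- ncard ≥ 2
    obtain ⟨x, hx⟩ := hNne
    by_contra hlt
    push_neg at hlt
    have : N = {x} := by
      apply Set.eq_singleton_iff_unique_mem.mpr
      refine ⟨hx, fun y hy => ?_⟩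
      by_contra hyx
      have h2 : 1 < N.ncard := (Set.one_lt_ncard_iff hNfin).mpr ⟨y, x, hy, hx, hyx⟩
      omega
    exact hNotBP1 (Or.inl ⟨x, this⟩)
  · -- connectedness
    by_contra hc
    have hNesub : Nonempty ↥N := hNne.to_subtype
    rw [SimpleGraph.connected_iff] at hc
    push_neg at hc
    have hpre : ¬ (Gᶜ.induce N).Preconnected := fun hp => @IsEmpty.false _ (hc hp) hNesub.some
    rw [SimpleGraph.Preconnected] at hpre
    push_neg at hpre
    obtain ⟨a, b, hab⟩ := hpre
    set C : Set V := {z : V | ∃ hz : z ∈ N, (Gᶜ.induce N).Reachable a ⟨z, hz⟩} with hC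
    have hCsub : C ⊆ N := fun z hz => hz.1
    have haC : (a : V) ∈ C := ⟨a.2, by rfl⟩
    have hbD : (b : V) ∈ N \ C := by
      refine ⟨b.2, fun hbC => ?_⟩
      obtain ⟨hz, hr⟩ := hbC
      exact hab (by convert hr)
    have hedge : ∀ c ∈ C, ∀ d ∈ N \ C, G.Adj c d := by
      rintro c ⟨hcN, hrc⟩ d ⟨hdN, hdC⟩
      have hcd : c ≠ d := fun he => hdC (he ▸ ⟨hcN, hrc⟩)
      by_contra hng
      have hcompl : Gᶜ.Adj c d := ⟨hcd, hng⟩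
      have hadj : (Gᶜ.induce N).Adj ⟨c, hcN⟩ ⟨d, hdN⟩ := hcompl
      exact hdC ⟨hdN, hrc.trans hadj.reachable⟩
    apply hNotBP1
    right
    exact ⟨C, N \ C, ⟨a, haC⟩, ⟨b, hbD⟩, Set.disjoint_sdiff_right,
      Set.union_diff_cancel hCsub, hedge⟩
end

section
/- Let G be a finite simple graph on at least 3 vertices that is not in BP2. Then in the complement graph Ḡ, every vertex is at distance at most two from every other vertex (i.e., Ḡ is connected with diameter at most 2). -/
/-- A star centered at `u` over a set `B` of neighbors of `u` is in BP1. -/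
lemma star_BP1 {V : Type*} (G : SimpleGraph V) (u : V) (B : Set V)
    (hB : ∀ b ∈ B, G.Adj u b) : BP1On G ({u} ∪ B) := by
  rcases B.eq_empty_or_nonempty with hne | hne
  · left; exact ⟨u, by simp [hne]⟩
  · right
    refine ⟨{u}, B, Set.singleton_nonempty u, hne, ?_, rfl, ?_⟩
    · rw [Set.disjoint_singleton_left]
      intro hu
      exact (G.loopless.irrefl u (hB u hu))
    · rintro a rfl b hb
      exact hB b hb

/-- If a finite simple graph `G` on at least three vertices is not in BP2, then the
complement `Gᶜ` is connected and every vertex of `Gᶜ` is at distance at most two from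
every other vertex. -/
theorem compl_diameter_le_two {V : Type*} [Fintype V] (G : SimpleGraph V)
    (h3 : 3 ≤ Fintype.card V) (h : ¬ BP2On G Set.univ) :
    Gᶜ.Connected ∧ ∀ u w : V, Gᶜ.dist u w ≤ 2 := by
  have key : ∀ u w : V, u ≠ w → Gᶜ.Adj u w ∨ ∃ x, Gᶜ.Adj u x ∧ Gᶜ.Adj x w := by
    intro u w huw
    by_contra hc
    push_neg at hc
    obtain ⟨hadj, hx⟩ := hc
    have hGuw : G.Adj u w := by
      by_contra hG
      exact hadj ⟨huw, hG⟩
    apply h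
    right
    set A : Set V := {u} ∪ {x | x ≠ w ∧ G.Adj u x} with hA
    set B : Set V := {w} ∪ {x | x ≠ u ∧ x ≠ w ∧ ¬ G.Adj u x ∧ G.Adj w x} with hBdef
    refine ⟨A, B, ⟨u, Or.inl rfl⟩, ⟨w, Or.inl rfl⟩, ?_, ?_, ?_, ?_⟩
    · rw [Set.disjoint_left]
      rintro y (rfl | ⟨hyw, hy⟩)
      · rintro (rfl | ⟨hyu, _⟩)
        · exact huw rfl
        · exact hyu rfl
      · rintro (rfl | ⟨_, _, hny, _⟩)
        · exact hyw rfl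
        · exact hny hy
    · ext y
      simp only [Set.mem_union, Set.mem_univ, iff_true]
      by_cases hyu : y = u
      · exact Or.inl (Or.inl hyu)
      by_cases hyw : y = w
      · exact Or.inr (Or.inl hyw)
      by_cases hGy : G.Adj u y
      · exact Or.inl (Or.inr ⟨hyw, hGy⟩)
      · have h1 : Gᶜ.Adj u y := ⟨fun e => hyu e.symm, hGy⟩
        have h2 := hx y h1
        have hGyw : G.Adj y w := by
          by_contra hG
          exact h2 ⟨hyw, hG⟩
        exact Or.inr (Or.inr ⟨hyu, hyw, hGy, hGyw.symm⟩)
    · exact star_BP1 G u _ (fun b hb => hb.2)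
    · exact star_BP1 G w _ (fun b hb => hb.2.2.2)
  have hne : Nonempty V := Fintype.card_pos_iff.mp (by omega)
  have reach : ∀ u w : V, Gᶜ.Reachable u w := by
    intro u w
    by_cases huw : u = w
    · exact huw ▸ SimpleGraph.Reachable.refl u
    rcases key u w huw with hadj | ⟨x, h1, h2⟩
    · exact hadj.reachable
    · exact h1.reachable.trans h2.reachable
  refine ⟨⟨reach⟩, ?_⟩
  intro u w
  by_cases huw : u = w
  · simp [huw, SimpleGraph.dist_self]
  rcases key u w huw with hadj | ⟨x, h1, h2⟩
  · calc Gᶜ.dist u w ≤ (SimpleGraph.Walk.cons hadj SimpleGraph.Walk.nil).length :=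
        SimpleGraph.dist_le _
      _ ≤ 2 := by simp
  · calc Gᶜ.dist u w
        ≤ (SimpleGraph.Walk.cons h1 (SimpleGraph.Walk.cons h2 SimpleGraph.Walk.nil)).length :=
        SimpleGraph.dist_le _
      _ ≤ 2 := by simp
end

section
/- Let G be a finite simple graph on at least 3 vertices that is not in BP2. Then every pair of distinct vertices that are nonadjacent in the complement graph Ḡ has a common neighbour in Ḡ. -/
/-- A star (center adjacent to all other members) is in BP1. -/
lemma bp1_insert {V : Type*} (G : SimpleGraph V) (a : V) (s : Set V) (ha : a ∉ s)
    (hadj : ∀ b ∈ s, G.Adj a b) : BP1On G (insert a s) := by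
  rcases s.eq_empty_or_nonempty with rfl | hs
  · exact Or.inl ⟨a, by simp⟩
  · refine Or.inr ⟨{a}, s, ⟨a, rfl⟩, hs, by simpa using ha, Set.singleton_union .., ?_⟩
    rintro x rfl b hb
    exact hadj b hb

/-- If a finite simple graph `G` on at least three vertices is not in BP2, then every pair
of distinct vertices that are nonadjacent in the complement `Gᶜ` has a common neighbour
in `Gᶜ`. -/
theorem compl_common_neighbor {V : Type*} [Fintype V] (G : SimpleGraph V)
    (h3 : 3 ≤ Fintype.card V) (h : ¬ BP2On G Set.univ) :
    ∀ u v : V, u ≠ v → ¬ Gᶜ.Adj u v → ∃ w : V, Gᶜ.Adj u w ∧ Gᶜ.Adj v w := by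
  intro u v huv hnadj
  have huvAdj : G.Adj u v := by
    by_contra hG
    exact hnadj ((G.compl_adj _ _).mpr ⟨huv, hG⟩)
  by_contra hw
  push_neg at hw
  -- every vertex other than u, v not adjacent to u is adjacent to v
  have key : ∀ w, w ≠ u → w ≠ v → ¬ G.Adj u w → G.Adj v w := by
    intro w hwu hwv hGu
    have h1 : Gᶜ.Adj u w := (G.compl_adj _ _).mpr ⟨Ne.symm hwu, hGu⟩
    have h2 := hw w h1
    rw [SimpleGraph.compl_adj] at h2
    push_neg at h2
    exact h2 (Ne.symm hwv)
  apply h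
  refine Or.inr ⟨insert u {w | G.Adj u w ∧ w ≠ v},
    insert v {w | ¬ G.Adj u w ∧ w ≠ u ∧ w ≠ v}, ⟨u, Set.mem_insert ..⟩,
    ⟨v, Set.mem_insert ..⟩, ?_, ?_, ?_, ?_⟩
  · rw [Set.disjoint_left]
    rintro x (rfl | ⟨hx1, hx2⟩) hxB
    · rcases hxB with rfl | ⟨_, hx, _⟩
      · exact huv rfl
      · exact hx rfl
    · rcases hxB with rfl | ⟨hx3, _, _⟩
      · exact hx2 rfl
      · exact hx3 hx1
  · ext x
    simp only [Set.mem_union, Set.mem_insert_iff, Set.mem_setOf_eq, Set.mem_univ, iff_true]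
    by_cases hxu : x = u
    · exact Or.inl (Or.inl hxu)
    by_cases hxv : x = v
    · exact Or.inr (Or.inl hxv)
    by_cases hA : G.Adj u x
    · exact Or.inl (Or.inr ⟨hA, hxv⟩)
    · exact Or.inr (Or.inr ⟨hA, hxu, hxv⟩)
  · refine bp1_insert G u _ (fun hu => ?_) (fun b hb => hb.1)
    exact G.irrefl hu.1
  · refine bp1_insert G v _ (fun hv => ?_) ?_
    · exact hv.2.2 rfl
    · rintro b ⟨hb1, hb2, hb3⟩
      exact key b hb2 hb3 hb1
end

section
/- Let G be a finite simple connected graph in BP2 but not in BP1, and let v be a vertex of G such that neither G − v nor G − N_G[v] is in BP1. Let S be the set of all vertices u ∈ N_G(v) such that u is nonadjacent in G to at least one vertex of V(G) ∖ N_G[v]. Then G admits a partition of its vertex set into a star centered at v and a biclique if and only if S ≠ N_G(v); moreover, in that case G[{v} ∪ S] is a star centered at v and G − v − S is in BP1. -/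
/-- The vertex set `P` is (covered by) a star of `G` centered at `v`:
`v ∈ P` and `v` is adjacent in `G` to every other vertex of `P`. -/
def IsStarOn {V : Type*} (G : SimpleGraph V) (v : V) (P : Set V) : Prop :=
  v ∈ P ∧ ∀ u ∈ P, u ≠ v → G.Adj v u

/-- Let `G` be a connected graph in BP2 but not in BP1 and let `v` be a vertex such that
neither `G - v` nor `G - N[v]` is in BP1.  Let `S` be the set of neighbours of `v` that
are nonadjacent to at least one vertex outside `N[v]`.  Then `G` admits a partition into
a star centered at `v` and a biclique if and only if `S ≠ N_G(v)`; moreover, in that case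
`{v} ∪ S` is a star centered at `v` and `G - v - S` is in BP1. -/
theorem star_biclique_partition_iff {V : Type*} [Fintype V] (G : SimpleGraph V)
    (hconn : G.Connected)
    (hbp2 : BP2On G Set.univ) (hnbp1 : ¬ BP1On G Set.univ) (v : V)
    (hv1 : ¬ BP1On G ({v}ᶜ : Set V))
    (hv2 : ¬ BP1On G ((insert v (G.neighborSet v))ᶜ : Set V))
    (S : Set V)
    (hS : S = {u ∈ G.neighborSet v |
      ∃ w ∈ ((insert v (G.neighborSet v))ᶜ : Set V), ¬ G.Adj u w}) :
    ((∃ P T : Set V, P.Nonempty ∧ T.Nonempty ∧ Disjoint P T ∧ P ∪ T = Set.univ ∧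
        IsStarOn G v P ∧ BP1On G T) ↔ S ≠ G.neighborSet v) ∧
    (S ≠ G.neighborSet v →
      IsStarOn G v (insert v S) ∧ BP1On G ((insert v S)ᶜ : Set V)) := by
  -- The set outside the closed neighborhood of `v` is nonempty.
  have hBne : ((insert v (G.neighborSet v))ᶜ : Set V).Nonempty := by
    by_contra h
    rw [Set.not_nonempty_iff_eq_empty, Set.compl_empty_iff] at h
    apply hnbp1
    rcases Set.eq_empty_or_nonempty (G.neighborSet v) with hN | hN
    · left
      refine ⟨v, ?_⟩
      rw [← h, hN]
      simp
    · right
      refine ⟨{v}, G.neighborSet v, ⟨v, rfl⟩, hN, ?_, ?_, ?_⟩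
      · rw [Set.disjoint_singleton_left]
        simp
      · rw [Set.singleton_union]; exact h
      · intro a ha b hb
        rw [Set.mem_singleton_iff] at ha
        subst ha
        exact hb
  have hSsub : S ⊆ G.neighborSet v := by
    intro u hu; rw [hS] at hu; exact hu.1
  -- The "moreover" part.
  have hmain : S ≠ G.neighborSet v →
      IsStarOn G v (insert v S) ∧ BP1On G ((insert v S)ᶜ : Set V) := by
    intro hne
    have hAne : (G.neighborSet v \ S).Nonempty := by
      rcases Set.exists_of_ssubset (hSsub.ssubset_of_ne hne) with ⟨u, hu1, hu2⟩
      exact ⟨u, hu1, hu2⟩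
    constructor
    · refine ⟨Set.mem_insert _ _, fun u hu hune => ?_⟩
      rcases hu with h | h
      · exact absurd h hune
      · exact hSsub h
    · right
      refine ⟨G.neighborSet v \ S, (insert v (G.neighborSet v))ᶜ, hAne, hBne, ?_, ?_, ?_⟩
      · exact Set.disjoint_of_subset_left
          (fun x hx => Set.mem_insert_iff.mpr (Or.inr hx.1)) disjoint_compl_right
      · ext x
        simp only [Set.mem_union, Set.mem_diff, Set.mem_compl_iff, Set.mem_insert_iff,
          SimpleGraph.mem_neighborSet, not_or]
        constructor
        · rintro (⟨hadj, hnS⟩ | ⟨hnv, hnadj⟩)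
          · exact ⟨fun hx => by subst hx; exact G.irrefl hadj, hnS⟩
          · exact ⟨hnv, fun hx => hnadj (hSsub hx)⟩
        · rintro ⟨hxv, hxS⟩
          by_cases hadj : G.Adj v x
          · exact Or.inl ⟨hadj, hxS⟩
          · exact Or.inr ⟨hxv, hadj⟩
      · intro a ha b hb
        by_contra hnadj
        apply ha.2
        rw [hS]
        exact ⟨ha.1, b, hb, hnadj⟩
  refine ⟨⟨?_, fun hne => ?_⟩, hmain⟩
  · -- forward direction: a partition forces `S ≠ N(v)`.
    rintro ⟨P, T, hPne, hTne, hdisj, hunion, hstar, hTbp1⟩ hSeq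
    have hvP : v ∈ P := hstar.1
    have hPsub : P ⊆ insert v (G.neighborSet v) := by
      intro u hu
      by_cases h : u = v
      · exact h ▸ Set.mem_insert _ _
      · exact Set.mem_insert_iff.mpr (Or.inr (hstar.2 u hu h))
    have hBsubT : ((insert v (G.neighborSet v))ᶜ : Set V) ⊆ T := by
      intro x hx
      have hxu : x ∈ P ∪ T := hunion ▸ Set.mem_univ x
      rcases hxu with h | h
      · exact absurd (hPsub h) hx
      · exact h
    -- every vertex of `T` outside `N[v]ᶜ` is a neighbour of `v`, hence in `S`
    have hTS : ∀ x ∈ T, x ∉ ((insert v (G.neighborSet v))ᶜ : Set V) → x ∈ S := by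
      intro x hxT hxB
      rw [Set.notMem_compl_iff] at hxB
      rcases Set.mem_insert_iff.mp hxB with h | h
      · subst h
        exact absurd hvP (Set.disjoint_right.mp hdisj hxT)
      · rw [hSeq]; exact h
    rcases hTbp1 with ⟨t, hT⟩ | ⟨X, Y, hXne, hYne, hXYdisj, hXYu, hadj⟩
    · -- `T` is a singleton, so `N[v]ᶜ` is a singleton, contradicting `hv2`.
      apply hv2
      left
      refine ⟨t, ?_⟩
      exact (Set.Nonempty.subset_singleton_iff hBne).mp (hT ▸ hBsubT)
    · rcases Set.eq_empty_or_nonempty (X ∩ (insert v (G.neighborSet v))ᶜ) with hX0 | hX0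
      · -- every vertex of `B` lies in `Y`; pick `x ∈ X`, it is in `S`, contradiction
        rcases hXne with ⟨x, hx⟩
        have hxT : x ∈ T := hXYu ▸ Set.mem_union_left _ hx
        have hxB : x ∉ ((insert v (G.neighborSet v))ᶜ : Set V) := by
          intro h
          exact Set.eq_empty_iff_forall_notMem.mp hX0 x ⟨hx, h⟩
        have hxS : x ∈ S := hTS x hxT hxB
        rw [hS] at hxS
        rcases hxS.2 with ⟨w, hwB, hwn⟩
        have hwT : w ∈ T := hBsubT hwB
        have hwY : w ∈ Y := by
          rcases (hXYu ▸ hwT : w ∈ X ∪ Y) with h | h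
          · exact absurd ⟨h, hwB⟩ (Set.eq_empty_iff_forall_notMem.mp hX0 w)
          · exact h
        exact hwn (hadj x hx w hwY)
      · rcases Set.eq_empty_or_nonempty (Y ∩ (insert v (G.neighborSet v))ᶜ) with hY0 | hY0
        · rcases hYne with ⟨y, hy⟩
          have hyT : y ∈ T := hXYu ▸ Set.mem_union_right _ hy
          have hyB : y ∉ ((insert v (G.neighborSet v))ᶜ : Set V) := by
            intro h
            exact Set.eq_empty_iff_forall_notMem.mp hY0 y ⟨hy, h⟩
          have hyS : y ∈ S := hTS y hyT hyB
          rw [hS] at hyS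
          rcases hyS.2 with ⟨w, hwB, hwn⟩
          have hwT : w ∈ T := hBsubT hwB
          have hwX : w ∈ X := by
            rcases (hXYu ▸ hwT : w ∈ X ∪ Y) with h | h
            · exact h
            · exact absurd ⟨h, hwB⟩ (Set.eq_empty_iff_forall_notMem.mp hY0 w)
          exact hwn ((hadj w hwX y hy).symm)
        · -- both sides meet `B`, so `B` is a biclique, contradicting `hv2`.
          apply hv2
          right
          refine ⟨X ∩ (insert v (G.neighborSet v))ᶜ, Y ∩ (insert v (G.neighborSet v))ᶜ,
            hX0, hY0, Set.disjoint_of_subset Set.inter_subset_left Set.inter_subset_left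
              hXYdisj, ?_, fun a ha b hb => hadj a ha.1 b hb.1⟩
          rw [← Set.union_inter_distrib_right, hXYu,
            Set.inter_eq_right.mpr hBsubT]
  · -- backward direction: use the "moreover" part.
    obtain ⟨hstar, hbic⟩ := hmain hne
    refine ⟨insert v S, (insert v S)ᶜ, ⟨v, Set.mem_insert _ _⟩, ?_,
      disjoint_compl_right, Set.union_compl_self _, hstar, hbic⟩
    rcases Set.exists_of_ssubset (hSsub.ssubset_of_ne hne) with ⟨u, hu1, hu2⟩
    refine ⟨u, ?_⟩
    simp only [Set.mem_compl_iff, Set.mem_insert_iff, not_or]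
    exact ⟨fun h => by subst h; exact G.irrefl hu1, hu2⟩
end

section
/- Let G be a finite simple graph in BP2 but not in BP1 such that G admits no star-biclique partition. Then for every vertex v of G, the graph G − v is also in BP2 but not in BP1. -/
/-- The induced subgraph of `G` on `s` admits a star-biclique partition: a partition of `s`
into two nonempty parts `S` and `T` such that `S` is covered by a star of `G` and `G[T]`
is in BP1. -/
def SBPOn {V : Type*} (G : SimpleGraph V) (s : Set V) : Prop :=
  ∃ S T : Set V, S.Nonempty ∧ T.Nonempty ∧ Disjoint S T ∧ S ∪ T = s ∧
    (∃ v ∈ S, ∀ u ∈ S, u ≠ v → G.Adj v u) ∧ BP1On G T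

private lemma key {V : Type*} (G : SimpleGraph V) (A B : Set V)
    (hA : BP1On G A) (hB : BP1On G B) (hAne : A.Nonempty) (hBne : B.Nonempty)
    (hd : Disjoint A B) (hu : A ∪ B = Set.univ) (v : V) (hv : v ∈ A)
    (hnsbp : ¬ SBPOn G Set.univ) : BP2On G ({v}ᶜ : Set V) := by
  have hvB : v ∉ B := fun hvb => (Set.disjoint_left.mp hd hv) hvb
  rcases hA with ⟨a, rfl⟩ | ⟨A1, A2, h1ne, h2ne, hd12, hun, hadj⟩
  · -- A = {a}, v = a, so {v}ᶜ = B
    have hva : v = a := hv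
    subst hva
    have hBc : ({v}ᶜ : Set V) = B := by
      ext x
      constructor
      · intro hx
        have : x ∈ ({v} : Set V) ∪ B := hu ▸ Set.mem_univ x
        rcases this with h | h
        · exact absurd h hx
        · exact h
      · intro hx hxv
        exact (Set.disjoint_left.mp hd (by exact hxv)) hx
    rw [hBc]; exact Or.inl hB
  · -- A = A1 ∪ A2 biclique
    have hvA : v ∈ A1 ∪ A2 := hun ▸ hv
    have star_case : v ∈ A → (∀ u ∈ A, u ≠ v → G.Adj v u) → BP2On G ({v}ᶜ : Set V) := by
      intro hvA' hstar
      exact absurd ⟨A, B, hAne, hBne, hd, hu, ⟨v, hvA', hstar⟩, hB⟩ hnsbp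
    have main : ∀ (X Y : Set V), X.Nonempty → Y.Nonempty → Disjoint X Y →
        X ∪ Y = A → (∀ a ∈ X, ∀ b ∈ Y, G.Adj a b) → v ∈ X →
        BP2On G ({v}ᶜ : Set V) := by
      intro X Y hXne hYne hdXY hXY hadj' hvX
      by_cases h : (X \ {v}).Nonempty
      · -- A \ {v} is still a biclique
        have hvY : v ∉ Y := fun hvy => (Set.disjoint_left.mp hdXY hvX) hvy
        refine Or.inr ⟨A \ {v}, B, ?_, hBne, ?_, ?_, ?_, hB⟩
        · obtain ⟨x, hx⟩ := h
          exact ⟨x, (hXY ▸ Set.mem_union_left Y hx.1 : x ∈ A), hx.2⟩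
        · exact Disjoint.mono_left Set.diff_subset hd
        · ext x
          simp only [Set.mem_union, Set.mem_diff, Set.mem_singleton_iff,
            Set.mem_compl_iff]
          constructor
          · rintro (⟨_, hxv⟩ | hxB)
            · exact hxv
            · intro hxv; subst hxv; exact hvB hxB
          · intro hxv
            have : x ∈ A ∪ B := hu ▸ Set.mem_univ x
            rcases this with hxA | hxB
            · exact Or.inl ⟨hxA, hxv⟩
            · exact Or.inr hxB
        · refine Or.inr ⟨X \ {v}, Y, h, hYne, Disjoint.mono_left Set.diff_subset hdXY,
            ?_, fun a ha b hb => hadj' a ha.1 b hb⟩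
          rw [← hXY, Set.union_diff_distrib, Set.diff_singleton_eq_self hvY]
      · -- X = {v}, so A is a star with center v
        have hX : X = {v} := by
          apply Set.eq_singleton_iff_unique_mem.mpr
          refine ⟨hvX, fun x hx => ?_⟩
          by_contra hxv
          exact h ⟨x, hx, hxv⟩
        apply star_case hv
        intro u hu' huv
        have : u ∈ X ∪ Y := hXY ▸ hu'
        rcases this with hu2 | hu2
        · rw [hX] at hu2; exact absurd hu2 huv
        · exact hadj' v hvX u hu2
    rcases hvA with hv1 | hv2
    · exact main A1 A2 h1ne h2ne hd12 hun hadj hv1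
    · exact main A2 A1 h2ne h1ne hd12.symm (Set.union_comm A2 A1 ▸ hun)
        (fun a ha b hb => (hadj b hb a ha).symm) hv2

/-- If a finite simple graph `G` is in BP2 but not in BP1 and admits no star-biclique
partition, then for every vertex `v`, the graph `G - v` is also in BP2 but not in BP1. -/
theorem delete_vertex_bp2_not_bp1 {V : Type*} [Fintype V] (G : SimpleGraph V)
    (hbp2 : BP2On G Set.univ) (hnbp1 : ¬ BP1On G Set.univ)
    (hnsbp : ¬ SBPOn G Set.univ) (v : V) :
    BP2On G ({v}ᶜ : Set V) ∧ ¬ BP1On G ({v}ᶜ : Set V) := by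
  constructor
  · rcases hbp2 with h | ⟨A, B, hAne, hBne, hd, hu, hA, hB⟩
    · exact absurd h hnbp1
    · have hv : v ∈ A ∪ B := hu ▸ Set.mem_univ v
      rcases hv with hvA | hvB
      · exact key G A B hA hB hAne hBne hd hu v hvA hnsbp
      · exact key G B A hB hA hBne hAne hd.symm (Set.union_comm B A ▸ hu) v hvB hnsbp
  · intro h
    apply hnsbp
    have hTne : ({v}ᶜ : Set V).Nonempty := by
      rcases h with ⟨a, ha⟩ | ⟨A, B, hAne, _, _, hu, _⟩
      · exact ⟨a, ha ▸ rfl⟩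
      · obtain ⟨x, hx⟩ := hAne
        exact hu ▸ (⟨x, Set.mem_union_left B hx⟩ : (A ∪ B).Nonempty)
    exact ⟨{v}, {v}ᶜ, ⟨v, rfl⟩, hTne, disjoint_compl_right, Set.union_compl_self _,
      ⟨v, rfl, fun u hu huv => absurd hu huv⟩, h⟩
end

section
/- Let G be a finite simple graph in BP2 but not in BP1. Then there exists an integer l ≥ 0 such that: for every sequence of l distinct vertices v_1, …, v_l of G, each of the graphs G_0, G_1, …, G_l is in BP2 but not in BP1, where G_i is obtained from G by deleting v_1, …, v_i; none of G_0, …, G_{l−1} admits a star-biclique partition; and there exists a set of l vertices whose deletion from G yields a graph admitting a star-biclique partition. -/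
lemma sbp_of_bp1_del {V : Type*} (G : SimpleGraph V) {s : Set V} {v : V}
    (hv : v ∈ s) (hne : (s \ {v}).Nonempty) (hb : BP1On G (s \ {v})) : SBPOn G s := by
  refine ⟨{v}, s \ {v}, ⟨v, rfl⟩, hne, ?_, Set.union_diff_cancel (by simpa using hv), ?_, hb⟩
  · simp [Set.disjoint_left]
  · exact ⟨v, rfl, fun u hu hne' => absurd (by simpa using hu) hne'⟩

lemma step_nbp1 {V : Type*} (G : SimpleGraph V) {s : Set V} {v : V}
    (hv : v ∈ s) (h1 : ¬ BP1On G s) (hs : ¬ SBPOn G s) : ¬ BP1On G (s \ {v}) := by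
  intro hb
  by_cases hne : (s \ {v}).Nonempty
  · exact hs (sbp_of_bp1_del G hv hne hb)
  · apply h1
    left
    refine ⟨v, Set.Subset.antisymm (fun x hx => ?_) (by simpa using hv)⟩
    by_contra hxv
    exact hne ⟨x, hx, hxv⟩

/-- If `P` is BP1 containing `v`, with a biclique side being `{v}`, we get a star on `P`. -/
lemma aux2 {V : Type*} (G : SimpleGraph V) {s P Q A B : Set V} {v : V}
    (hv : v ∈ A) (hA : A.Nonempty) (hB : B.Nonempty) (hAB : Disjoint A B)
    (hABP : A ∪ B = P) (hadj : ∀ a ∈ A, ∀ b ∈ B, G.Adj a b)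
    (bQ : BP1On G Q) (hQ : Q.Nonempty) (hPQ : Disjoint P Q) (hun : P ∪ Q = s) :
    BP2On G (s \ {v}) ∨ SBPOn G s := by
  by_cases hAv : (A \ {v}).Nonempty
  · left
    right
    have hvQ : v ∉ Q := fun h => hPQ.ne_of_mem (hABP ▸ Set.mem_union_left B hv) h rfl
    refine ⟨P \ {v}, Q, ?_, hQ, ?_, ?_, ?_, bQ⟩
    · obtain ⟨a, ha⟩ := hAv
      exact ⟨a, (hABP ▸ Set.mem_union_left B ha.1 : a ∈ P), ha.2⟩
    · exact Disjoint.mono_left Set.diff_subset hPQ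
    · rw [← hun]
      ext x
      simp only [Set.mem_diff, Set.mem_union, Set.mem_singleton_iff]
      constructor
      · rintro (⟨h, h2⟩ | h)
        · exact ⟨Or.inl h, h2⟩
        · exact ⟨Or.inr h, fun hh => hvQ (hh ▸ h)⟩
      · rintro ⟨h | h, h2⟩
        · exact Or.inl ⟨h, h2⟩
        · exact Or.inr h
    · right
      refine ⟨A \ {v}, B, hAv, hB, Disjoint.mono_left Set.diff_subset hAB, ?_,
        fun a ha b hb => hadj a ha.1 b hb⟩
      rw [← hABP]
      ext x
      simp only [Set.mem_diff, Set.mem_union, Set.mem_singleton_iff]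
      constructor
      · rintro (⟨h, h2⟩ | h)
        · exact ⟨Or.inl h, h2⟩
        · exact ⟨Or.inr h, fun hh => hAB.ne_of_mem hv h hh.symm⟩
      · rintro ⟨h | h, h2⟩
        · exact Or.inl ⟨h, h2⟩
        · exact Or.inr h
  · -- A = {v}, so v is adjacent to everything in B, P = {v} ∪ B is a star
    right
    have hAveq : A = {v} := by
      apply Set.Subset.antisymm
      · intro x hx
        by_contra hxv
        exact hAv ⟨x, hx, hxv⟩
      · simpa using hv
    refine ⟨P, Q, ⟨v, hABP ▸ Set.mem_union_left B hv⟩, hQ, hPQ, hun, ?_, bQ⟩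
    refine ⟨v, hABP ▸ Set.mem_union_left B hv, fun u hu hne => ?_⟩
    rw [← hABP] at hu
    rcases hu with h | h
    · exact absurd (by simpa [hAveq] using h) hne
    · exact hadj v hv u h

lemma aux1 {V : Type*} (G : SimpleGraph V) {s P Q : Set V} {v : V}
    (hv : v ∈ P) (bP : BP1On G P) (bQ : BP1On G Q) (hQ : Q.Nonempty)
    (hPQ : Disjoint P Q) (hun : P ∪ Q = s) :
    BP2On G (s \ {v}) ∨ SBPOn G s := by
  rcases bP with ⟨w, hw⟩ | ⟨A, B, hA, hB, hAB, hABP, hadj⟩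
  · left
    have hvw : v = w := by simpa [hw] using hv
    have : s \ {v} = Q := by
      rw [← hun, hw, hvw]
      ext x
      simp only [Set.mem_diff, Set.mem_union, Set.mem_singleton_iff]
      constructor
      · rintro ⟨h | h, h2⟩
        · exact absurd h h2
        · exact h
      · intro h
        exact ⟨Or.inr h, fun hh => hPQ.ne_of_mem hv h (hvw.trans hh.symm)⟩
    rw [this]
    exact Or.inl bQ
  · rw [← hABP] at hv
    rcases hv with hvA | hvB
    · exact aux2 G hvA hA hB hAB hABP hadj bQ hQ hPQ hun
    · exact aux2 G hvB hB hA hAB.symm (Set.union_comm A B ▸ hABP)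
        (fun a ha b hb => (hadj b hb a ha).symm) bQ hQ hPQ hun

lemma step_bp2 {V : Type*} (G : SimpleGraph V) {s : Set V} {v : V}
    (hv : v ∈ s) (h2 : BP2On G s) (h1 : ¬ BP1On G s) (hs : ¬ SBPOn G s) :
    BP2On G (s \ {v}) := by
  rcases h2 with h | ⟨P, Q, hP, hQ, hPQ, hun, bP, bQ⟩
  · exact absurd h h1
  · rw [← hun] at hv
    rcases hv with hvP | hvQ
    · rcases aux1 G hvP bP bQ hQ hPQ hun with h | h
      · exact h
      · exact absurd h hs
    · rcases aux1 G hvQ bQ bP hP hPQ.symm (Set.union_comm P Q ▸ hun) with h | h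
      · exact h
      · exact absurd h hs

lemma ncard_prefix {l : ℕ} {V : Type*} (f : Fin l → V) (hf : Function.Injective f)
    {i : ℕ} (hil : i ≤ l) : (f '' {j : Fin l | (j : ℕ) < i}).ncard = i := by
  have hset : {j : Fin l | (j : ℕ) < i} = Set.range (Fin.castLE hil) := by
    ext j
    simp only [Set.mem_setOf_eq, Set.mem_range]
    constructor
    · intro h
      exact ⟨⟨j, h⟩, rfl⟩
    · rintro ⟨k, rfl⟩
      exact k.2
  rw [Set.ncard_image_of_injective _ hf, hset, ← Nat.card_coe_set_eq,
    Nat.card_range_of_injective (Fin.castLE_injective hil), Nat.card_eq_fintype_card,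
    Fintype.card_fin]

/-- For every finite simple graph `G` in BP2 but not in BP1, there is an integer `l ≥ 0`
such that: for every sequence `v_1, …, v_l` of distinct vertices, each graph `G_i`
obtained by deleting `v_1, …, v_i` (for `0 ≤ i ≤ l`) is in BP2 but not in BP1, none of
`G_0, …, G_{l-1}` admits a star-biclique partition; and there exists a set of `l` vertices
whose deletion yields a graph admitting a star-biclique partition. -/

theorem exists_safe_length {V : Type*} [Fintype V] (G : SimpleGraph V)
    (hbp2 : BP2On G Set.univ) (hnbp1 : ¬ BP1On G Set.univ) :
    ∃ l : ℕ,
      (∀ f : Fin l → V, Function.Injective f →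
        (∀ i : ℕ, i ≤ l →
          BP2On G ((f '' {j : Fin l | (j : ℕ) < i})ᶜ : Set V) ∧
          ¬ BP1On G ((f '' {j : Fin l | (j : ℕ) < i})ᶜ : Set V)) ∧
        (∀ i : ℕ, i < l →
          ¬ SBPOn G ((f '' {j : Fin l | (j : ℕ) < i})ᶜ : Set V))) ∧
      (∃ X : Set V, X.ncard = l ∧ SBPOn G (Xᶜ : Set V)) := by
  classical
  -- V has at least two vertices
  obtain ⟨x, -⟩ : ∃ x : V, True := by
    rcases hbp2 with h | ⟨A, B, ⟨a, ha⟩, _, _, _, _, _⟩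
    · exact absurd h hnbp1
    · exact ⟨a, trivial⟩
  obtain ⟨a, b, hab⟩ : ∃ a b : V, a ≠ b := by
    by_contra h
    push_neg at h
    apply hnbp1
    left
    exact ⟨x, Set.eq_singleton_iff_unique_mem.mpr ⟨trivial, fun y _ => h y x⟩⟩
  have hsbp2 : SBPOn G ({a, b} : Set V) := by
    refine ⟨{a}, {b}, ⟨a, rfl⟩, ⟨b, rfl⟩, by simp [hab], Set.singleton_union, ?_, ?_⟩
    · exact ⟨a, rfl, fun u hu hne => absurd (by simpa using hu) hne⟩
    · exact Or.inl ⟨b, rfl⟩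
  have hex : ∃ l : ℕ, ∃ X : Set V, X.ncard = l ∧ SBPOn G (Xᶜ : Set V) :=
    ⟨(({a, b} : Set V)ᶜ).ncard, ({a, b} : Set V)ᶜ, rfl, by rw [compl_compl]; exact hsbp2⟩
  set l := Nat.find hex with hl
  have hspec := Nat.find_spec hex
  have hmin : ∀ i < l, ∀ X : Set V, X.ncard = i → ¬ SBPOn G (Xᶜ : Set V) := by
    intro i hi X hX hS
    exact Nat.find_min hex hi ⟨X, hX, hS⟩
  refine ⟨l, ?_, hspec⟩
  intro f hf
  have key : ∀ i : ℕ, i ≤ l →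
      BP2On G ((f '' {j : Fin l | (j : ℕ) < i})ᶜ : Set V) ∧
      ¬ BP1On G ((f '' {j : Fin l | (j : ℕ) < i})ᶜ : Set V) := by
    intro i hil
    induction i with
    | zero =>
      have : (f '' {j : Fin l | (j : ℕ) < 0})ᶜ = Set.univ := by simp
      rw [this]
      exact ⟨hbp2, hnbp1⟩
    | succ i ih =>
      have hil' : i < l := Nat.lt_of_succ_le hil
      obtain ⟨hb2, hb1⟩ := ih (le_of_lt hil')
      have hns : ¬ SBPOn G ((f '' {j : Fin l | (j : ℕ) < i})ᶜ : Set V) :=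
        hmin i hil' _ (ncard_prefix f hf (le_of_lt hil'))
      set v := f ⟨i, hil'⟩ with hvdef
      have hvmem : v ∈ (f '' {j : Fin l | (j : ℕ) < i})ᶜ := by
        intro hmem
        obtain ⟨j, hj, hje⟩ := hmem
        have := hf hje
        rw [this] at hj
        exact absurd hj (by simp)
      have hstep : (f '' {j : Fin l | (j : ℕ) < i + 1})ᶜ =
          (f '' {j : Fin l | (j : ℕ) < i})ᶜ \ {v} := by
        have : {j : Fin l | (j : ℕ) < i + 1} = {j : Fin l | (j : ℕ) < i} ∪ {⟨i, hil'⟩} := by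
          ext j
          simp only [Set.mem_setOf_eq, Set.mem_union, Set.mem_singleton_iff, Fin.ext_iff]
          omega
        rw [this, Set.image_union, Set.image_singleton, Set.compl_union, ← hvdef,
          Set.diff_eq]
      rw [hstep]
      exact ⟨step_bp2 G hvmem hb2 hb1 hns, step_nbp1 G hvmem hb1 hns⟩
  refine ⟨key, ?_⟩
  intro i hil
  exact hmin i hil _ (ncard_prefix f hf (le_of_lt hil))
end
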